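/- Let 𝒴 be a finite set, D₀, D₁ ⊆ 𝒴 nonempty, M_b := {x ∈ ℝ^𝒴 : supp(x) ⊆ D_b and Σ_{y∈D_b} x(y) = 0}, M := M₀ + M₁, and Π_J the orthogonal projection of ℝ^𝒴 onto M^⊥. For b ∈ {0,1} let p_b be a probability vector supported on D_b with p_b(y) > 0 for all y ∈ D_b, set μ_b := Σ_{y∈D_b} p_b(y) e_y and m_b := Π_J μ_b. Then: (a) if D₀ ∩ D₁ = ∅, then m₀ ≠ m₁; (b) if D₀ ∩ D₁ ≠ ∅, then m₀ = m₁, and therefore Δ := Π_J(μ₁ − μ₀) = 0. -/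

import Mathlib

open Finset

/-- The dominant tangent subspace `M_D = {x : supp(x) ⊆ D, Σ_{y∈D} x(y) = 0}`
inside the Euclidean space `ℝ^𝒴`. -/
noncomputable def tangent {Y : Type*} [Fintype Y] [DecidableEq Y] (D : Finset Y) :
    Submodule ℝ (EuclideanSpace ℝ Y) where
  carrier := {x | (∀ y ∉ D, x y = 0) ∧ ∑ y ∈ D, x y = 0}
  add_mem' := by
    rintro a b ⟨ha1, ha2⟩ ⟨hb1, hb2⟩
    refine ⟨fun y hy => ?_, ?_⟩
    · show a y + b y = 0
      rw [ha1 y hy, hb1 y hy, add_zero]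
    · show ∑ y ∈ D, (a y + b y) = 0
      rw [Finset.sum_add_distrib, ha2, hb2, add_zero]
  zero_mem' := ⟨fun y _ => rfl, by simp⟩
  smul_mem' := by
    rintro c a ⟨ha1, ha2⟩
    refine ⟨fun y hy => ?_, ?_⟩
    · show c * a y = 0
      rw [ha1 y hy, mul_zero]
    · show ∑ y ∈ D, c * a y = 0
      rw [← Finset.mul_sum, ha2, mul_zero]

/-- The quotient projection `Π_J`: orthogonal projection of `ℝ^𝒴` onto `M^⊥`,
where `M = M_{D₀} + M_{D₁}` is the dominant tangent space. -/
noncomputable def PiJ {Y : Type*} [Fintype Y] [DecidableEq Y] (D₀ D₁ : Finset Y) :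
    EuclideanSpace ℝ Y → EuclideanSpace ℝ Y :=
  fun x => (Submodule.orthogonalProjection (tangent D₀ + tangent D₁)ᗮ x : EuclideanSpace ℝ Y)


lemma mu_apply {Y : Type*} [Fintype Y] [DecidableEq Y] (D : Finset Y) (p : Y → ℝ) (z : Y) :
    (∑ y ∈ D, p y • EuclideanSpace.single y (1:ℝ)) z = if z ∈ D then p z else 0 := by
  classical
  induction D using Finset.induction with
  | empty => simp
  | @insert a s h ih =>
    rw [Finset.sum_insert h, PiLp.add_apply, PiLp.smul_apply, ih, EuclideanSpace.single_apply]
    rcases eq_or_ne z a with rfl | hz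
    · simp [h]
    · simp [hz, Finset.mem_insert]

lemma mem_tangent_iff {Y : Type*} [Fintype Y] [DecidableEq Y] (D : Finset Y)
    (x : EuclideanSpace ℝ Y) :
    x ∈ tangent D ↔ (∀ y ∉ D, x y = 0) ∧ ∑ y ∈ D, x y = 0 := Iff.rfl

/-- Dominant quotient atoms: disjointness and overlap. With
`μ_b = Σ_{y∈D_b} p_b(y) e_y` and `m_b = Π_J μ_b`:
(a) if `D₀ ∩ D₁ = ∅` then `m₀ ≠ m₁`;
(b) if `D₀ ∩ D₁ ≠ ∅` then `m₀ = m₁` and hence `Δ = Π_J(μ₁ − μ₀) = 0`. -/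
theorem dominant_quotient_atoms
    {Y : Type*} [Fintype Y] [DecidableEq Y]
    (D : Fin 2 → Finset Y) (hD : ∀ b, (D b).Nonempty)
    (p : Fin 2 → Y → ℝ)
    (hp_pos : ∀ b, ∀ y ∈ D b, 0 < p b y)
    (hp_supp : ∀ b, ∀ y ∉ D b, p b y = 0)
    (hp_sum : ∀ b, ∑ y ∈ D b, p b y = 1) :
    (Disjoint (D 0) (D 1) →
      PiJ (D 0) (D 1) (∑ y ∈ D 0, p 0 y • EuclideanSpace.single y 1) ≠
        PiJ (D 0) (D 1) (∑ y ∈ D 1, p 1 y • EuclideanSpace.single y 1)) ∧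
    ((D 0 ∩ D 1).Nonempty →
      PiJ (D 0) (D 1) (∑ y ∈ D 0, p 0 y • EuclideanSpace.single y 1) =
        PiJ (D 0) (D 1) (∑ y ∈ D 1, p 1 y • EuclideanSpace.single y 1) ∧
      PiJ (D 0) (D 1)
          ((∑ y ∈ D 1, p 1 y • EuclideanSpace.single y 1) -
            ∑ y ∈ D 0, p 0 y • EuclideanSpace.single y 1) = 0) := by
  classical
  set M : Submodule ℝ (EuclideanSpace ℝ Y) := tangent (D 0) + tangent (D 1) with hM
  set μ₀ : EuclideanSpace ℝ Y := ∑ y ∈ D 0, p 0 y • EuclideanSpace.single y (1:ℝ) with hμ₀def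
  set μ₁ : EuclideanSpace ℝ Y := ∑ y ∈ D 1, p 1 y • EuclideanSpace.single y (1:ℝ) with hμ₁def
  have hμ₀ : ∀ z, μ₀ z = if z ∈ D 0 then p 0 z else 0 := fun z => mu_apply _ _ z
  have hμ₁ : ∀ z, μ₁ z = if z ∈ D 1 then p 1 z else 0 := fun z => mu_apply _ _ z
  have hproj : ∀ v : EuclideanSpace ℝ Y, PiJ (D 0) (D 1) v = 0 ↔ v ∈ M := by
    intro v
    unfold PiJ
    rw [Submodule.coe_eq_zero, Submodule.orthogonalProjectionOnto_eq_zero_iff,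
      Submodule.orthogonal_orthogonal]
  have hsub : PiJ (D 0) (D 1) μ₁ - PiJ (D 0) (D 1) μ₀ = PiJ (D 0) (D 1) (μ₁ - μ₀) := by
    simp [PiJ, map_sub]
  constructor
  · intro hdisj heq
    have h0 : PiJ (D 0) (D 1) (μ₁ - μ₀) = 0 := by
      rw [← hsub, heq, sub_self]
    have hmem : μ₁ - μ₀ ∈ M := (hproj _).1 h0
    rw [hM, Submodule.add_eq_sup, Submodule.mem_sup] at hmem
    obtain ⟨a, ha, b, hb, hab⟩ := hmem
    rw [mem_tangent_iff] at ha hb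
    have hsum : ∑ z ∈ D 0, (a + b) z = ∑ z ∈ D 0, (μ₁ - μ₀) z := by rw [hab]
    have hL : ∑ z ∈ D 0, (a + b) z = 0 := by
      have hbz : ∀ z ∈ D 0, b z = 0 := fun z hz =>
        hb.1 z (Finset.disjoint_left.mp hdisj hz)
      calc ∑ z ∈ D 0, (a + b) z = ∑ z ∈ D 0, (a z + b z) := by
            refine Finset.sum_congr rfl fun z _ => ?_; rfl
        _ = ∑ z ∈ D 0, a z + ∑ z ∈ D 0, b z := Finset.sum_add_distrib
        _ = 0 := by rw [ha.2, Finset.sum_eq_zero hbz, add_zero]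
    have hR : ∑ z ∈ D 0, (μ₁ - μ₀) z = -1 := by
      have : ∀ z ∈ D 0, (μ₁ - μ₀) z = -(p 0 z) := by
        intro z hz
        have hz1 : z ∉ D 1 := Finset.disjoint_left.mp hdisj hz
        show μ₁ z - μ₀ z = -(p 0 z)
        rw [hμ₁ z, hμ₀ z, if_neg hz1, if_pos hz, zero_sub]
      rw [Finset.sum_congr rfl this, Finset.sum_neg_distrib, hp_sum 0]
    rw [hL, hR] at hsum
    norm_num at hsum
  · rintro ⟨y₀, hy₀⟩
    rw [Finset.mem_inter] at hy₀
    have hmem : μ₁ - μ₀ ∈ M := by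
      have key : ∀ b : Fin 2, y₀ ∈ D b →
          (∑ y ∈ D b, p b y • EuclideanSpace.single y (1:ℝ)) -
            EuclideanSpace.single y₀ (1:ℝ) ∈ tangent (D b) := by
        intro b hyb
        rw [mem_tangent_iff]
        constructor
        · intro y hy
          show (∑ y' ∈ D b, p b y' • EuclideanSpace.single y' (1:ℝ)) y -
              EuclideanSpace.single y₀ (1:ℝ) y = 0
          rw [mu_apply, if_neg hy, EuclideanSpace.single_apply,
            if_neg (fun h => hy (by rw [h]; exact hyb)), sub_zero]
        · have : ∀ z ∈ D b, ((∑ y ∈ D b, p b y • EuclideanSpace.single y (1:ℝ)) -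
              EuclideanSpace.single y₀ (1:ℝ)) z
              = p b z - (if z = y₀ then (1:ℝ) else 0) := by
            intro z hz
            show (∑ y ∈ D b, p b y • EuclideanSpace.single y (1:ℝ)) z -
              EuclideanSpace.single y₀ (1:ℝ) z = _
            rw [mu_apply, if_pos hz, EuclideanSpace.single_apply]
          rw [Finset.sum_congr rfl this, Finset.sum_sub_distrib, hp_sum b,
            Finset.sum_ite_eq' (D b) y₀ (fun _ => (1:ℝ)), if_pos hyb, sub_self]
      have h1 : μ₁ - EuclideanSpace.single y₀ (1:ℝ) ∈ M :=
        Submodule.mem_sup_right (key 1 hy₀.2)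
      have h0 : μ₀ - EuclideanSpace.single y₀ (1:ℝ) ∈ M :=
        Submodule.mem_sup_left (key 0 hy₀.1)
      have : μ₁ - μ₀ = (μ₁ - EuclideanSpace.single y₀ (1:ℝ)) -
          (μ₀ - EuclideanSpace.single y₀ (1:ℝ)) := by abel
      rw [this]
      exact Submodule.sub_mem M h1 h0
    have h0 : PiJ (D 0) (D 1) (μ₁ - μ₀) = 0 := (hproj _).2 hmem
    have heq : PiJ (D 0) (D 1) μ₀ = PiJ (D 0) (D 1) μ₁ :=
      (sub_eq_zero.mp (hsub.trans h0)).symm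
    exact ⟨heq, h0⟩
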